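/- In a dynamic ordinal game in reduced form satisfying the replacement property, fix a profile u = (u_j)_{j∈I} of Bernoulli utility functions with u_j ∈ 𝒰_j for every j. Then for every restriction R, 𝕄(R)[u] ⊆ 𝕌(R); that is, every strategy that is not strictly dominated by a mixed strategy (given u_i) at any nonempty restricted conditional problem it allows is also not conditionally B-dominated with respect to R. -/
import Mathlib


open scoped Classical

namespace ICBD

section OrdinalGames

variable {I : Type} [Fintype I] [DecidableEq I] [Nonempty I]
variable {S : I → Type} [∀ i, Fintype (S i)] [∀ i, DecidableEq (S i)] [∀ i, Nonempty (S i)]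
variable {Z : Type} [Fintype Z]

/-- Profiles of opponents' strategies for player `i`. -/
def Opp (S : I → Type) (i : I) : Type := ∀ j : {j : I // j ≠ i}, S j.1

instance (i : I) : Fintype (Opp S i) :=
  inferInstanceAs (Fintype (∀ j : {j : I // j ≠ i}, S j.1))

instance (i : I) : Nonempty (Opp S i) :=
  ⟨fun _ => Classical.ofNonempty⟩

variable (ζ : (∀ j, S j) → Z) (pref : I → Z → Z → Prop)

/-- The joint strategy profile where `i` plays `si` and the opponents play `t`. -/
def joint (i : I) (si : S i) (t : Opp S i) : ∀ j, S j := fun j =>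
  if h : j = i then cast (congrArg S h.symm) si else t ⟨j, h⟩

/-- Outcome when `i` plays `si` and the opponents play `t`. -/
def out (i : I) (si : S i) (t : Opp S i) : Z := ζ (joint i si t)

/-- Asymmetric part `≻ᵢ` of the preference relation `≿ᵢ`. -/
def SPref (i : I) (x y : Z) : Prop := pref i x y ∧ ¬ pref i y x

/-- `s'` strictly dominates `s` for player `i` against the opponents' profiles in `Q`. -/
def StrictDom (i : I) (Q : Set (Opp S i)) (s' s : S i) : Prop :=
  ∀ t ∈ Q, SPref pref i (out ζ i s' t) (out ζ i s t)

/-- `s'` weakly dominates `s` for player `i` against the opponents' profiles in `Q`. -/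
def WeakDom (i : I) (Q : Set (Opp S i)) (s' s : S i) : Prop :=
  (∀ t ∈ Q, pref i (out ζ i s' t) (out ζ i s t)) ∧
    ∃ t ∈ Q, SPref pref i (out ζ i s' t) (out ζ i s t)

/-- `s` is admissible with respect to the restriction `Ri × Q`. -/
def Admissible (i : I) (Ri : Set (S i)) (Q : Set (Opp S i)) (s : S i) : Prop :=
  s ∈ Ri ∧ ∀ s' ∈ Ri, ¬ WeakDom ζ pref i Q s' s

/-- `s` is Börgers-dominated with respect to the restriction `Ri × Q`. -/
def BDom (i : I) (Ri : Set (S i)) (Q : Set (Opp S i)) (s : S i) : Prop :=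
  ∀ Q' : Set (Opp S i), Q' ⊆ Q → Q'.Nonempty → ¬ Admissible ζ pref i Ri Q' s

/-- Opponents' profiles compatible with the restriction `R`. -/
def OppSet (R : ∀ j, Set (S j)) (i : I) : Set (Opp S i) :=
  {t | ∀ j : {j : I // j ≠ i}, t j ∈ R j.1}

/-- A restriction: componentwise nonempty product. -/
def IsRestriction (R : ∀ j, Set (S j)) : Prop := ∀ j, (R j).Nonempty

variable {H : I → Type} [∀ i, Fintype (H i)] [∀ i, Nonempty (H i)]
variable (Sh : ∀ i, H i → Set (S i)) (Th : ∀ i, H i → Set (Opp S i))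

/-- The replacement property of a dynamic ordinal game in reduced form. -/
def Replacement : Prop :=
  ∀ R : ∀ j, Set (S j), IsRestriction R →
    ∀ (i : I) (h : H i), (R i ∩ Sh i h).Nonempty →
      ∀ s ∈ R i ∩ Sh i h, ∀ s' ∈ R i ∩ Sh i h,
        ∃ s'' ∈ R i ∩ Sh i h,
          (∀ t ∈ OppSet R i ∩ Th i h, out ζ i s'' t = out ζ i s' t) ∧
          ∀ t ∈ OppSet R i \ (OppSet R i ∩ Th i h), out ζ i s'' t = out ζ i s t

/-- `s` is conditionally B-dominated with respect to `R`. -/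
def CondBDom (R : ∀ j, Set (S j)) (i : I) (s : S i) : Prop :=
  ∃ h : H i, s ∈ Sh i h ∧ (R i ∩ Sh i h).Nonempty ∧ (OppSet R i ∩ Th i h).Nonempty ∧
    BDom ζ pref i (R i ∩ Sh i h) (OppSet R i ∩ Th i h) s

/-- Total mass of the weights `p` on the event `E`. -/
noncomputable def measOf {i : I} (p : Opp S i → ℝ) (E : Set (Opp S i)) : ℝ :=
  ∑ t : Opp S i, if t ∈ E then p t else 0

/-- Conditional probability system for player `i`. -/
def IsCPS (i : I) (μ : H i → Opp S i → ℝ) : Prop :=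
  (∀ (h : H i) (t : Opp S i), 0 ≤ μ h t) ∧
  (∀ h : H i, ∑ t : Opp S i, μ h t = 1) ∧
  (∀ h : H i, measOf (μ h) (Th i h) = 1) ∧
  (∀ h h' : H i, Th i h = Th i h' → μ h = μ h') ∧
  ∀ (E : Set (Opp S i)) (h h' : H i), E ⊆ Th i h' → Th i h' ⊆ Th i h →
    measOf (μ h) E = measOf (μ h') E * measOf (μ h) (Th i h')

/-- Outcomes reachable within the restriction `R`. -/
def ZSet (R : ∀ j, Set (S j)) : Set Z := {z | ∃ s : ∀ j, S j, (∀ j, s j ∈ R j) ∧ ζ s = z}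

/-- `u` originates from `≿ᵢ` on the set `D` of outcomes. -/
def OriginatesOn (i : I) (D : Set Z) (u : Z → ℝ) : Prop :=
  ∀ z ∈ D, ∀ z' ∈ D, (u z' ≤ u z ↔ pref i z z')

/-- Bernoulli utility function for player `i`. -/
def Bernoulli (i : I) (u : Z → ℝ) : Prop := ∀ z z' : Z, u z' ≤ u z ↔ pref i z z'

/-- Expected utility of `s` over the opponents' profiles in `Rm` with weights `p`. -/
noncomputable def exValue (i : I) (Rm : Set (Opp S i)) (u : Z → ℝ) (p : Opp S i → ℝ)
    (s : S i) : ℝ :=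
  ∑ t : Opp S i, if t ∈ Rm then u (out ζ i s t) * p t else 0

/-- `sStar` is sequentially rational given `R` and the Bernoulli utility function `u`. -/
def SeqRationalU (R : ∀ j, Set (S j)) (i : I) (u : Z → ℝ) (sStar : S i) : Prop :=
  ∃ μ : H i → Opp S i → ℝ, IsCPS Th i μ ∧
    (∀ h : H i, (R i ∩ Sh i h).Nonempty → (OppSet R i ∩ Th i h).Nonempty →
      measOf (μ h) (OppSet R i ∩ Th i h) = 1) ∧
    ∀ h : H i, sStar ∈ Sh i h → (R i ∩ Sh i h).Nonempty → (OppSet R i ∩ Th i h).Nonempty →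
      ∀ s ∈ R i ∩ Sh i h,
        exValue ζ i (OppSet R i) u (μ h) s ≤ exValue ζ i (OppSet R i) u (μ h) sStar

/-- `sStar` is sequentially rational given `R`. -/
def SeqRational (R : ∀ j, Set (S j)) (i : I) (sStar : S i) : Prop :=
  ∃ u : Z → ℝ, OriginatesOn pref i (ZSet ζ R) u ∧ SeqRationalU ζ Sh Th R i u sStar

/-- `sStar` is cautiously sequentially rational given `R`. -/
def CautSeqRational (R : ∀ j, Set (S j)) (i : I) (sStar : S i) : Prop :=
  ∃ u : Z → ℝ, OriginatesOn pref i (ZSet ζ R) u ∧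
    ∃ μ : H i → Opp S i → ℝ, IsCPS Th i μ ∧
      (∀ h : H i, sStar ∈ Sh i h → (R i ∩ Sh i h).Nonempty →
        (OppSet R i ∩ Th i h).Nonempty → {t | 0 < μ h t} = OppSet R i ∩ Th i h) ∧
      ∀ h : H i, sStar ∈ Sh i h → (R i ∩ Sh i h).Nonempty →
          (OppSet R i ∩ Th i h).Nonempty →
        ∀ s ∈ R i ∩ Sh i h,
          exValue ζ i (OppSet R i) u (μ h) s ≤ exValue ζ i (OppSet R i) u (μ h) sStar

/-- The `𝕌` operator (strategies not conditionally B-dominated). -/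
def Uop (R : ∀ j, Set (S j)) : ∀ j, Set (S j) := fun j =>
  {s ∈ R j | ¬ CondBDom ζ pref Sh Th R j s}

/-- The `𝕊` operator (sequentially rational strategies). -/
def Sop (R : ∀ j, Set (S j)) : ∀ j, Set (S j) := fun j =>
  {s ∈ R j | SeqRational ζ pref Sh Th R j s}

/-- Iterative Conditional B-Dominance started from `R`. -/
def UiterFrom (R : ∀ j, Set (S j)) : ℕ → ∀ j, Set (S j)
  | 0 => R
  | n + 1 => Uop ζ pref Sh Th (UiterFrom R n)

/-- Iterative Conditional B-Dominance started from the full strategy sets. -/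
def Uiter (k : ℕ) : ∀ j, Set (S j) :=
  UiterFrom ζ pref Sh Th (fun _ => Set.univ) k

/-- Ordinal Strong Rationalizability started from `R`. -/
def SiterFrom (R : ∀ j, Set (S j)) : ℕ → ∀ j, Set (S j)
  | 0 => R
  | n + 1 => Sop ζ pref Sh Th (SiterFrom R n)

/-- Ordinal Strong Rationalizability started from the full strategy sets. -/
def Siter (k : ℕ) : ∀ j, Set (S j) :=
  SiterFrom ζ pref Sh Th (fun _ => Set.univ) k

/-- `σ` is a mixed strategy with support in `Ri`. -/
def IsMixedOn (i : I) (Ri : Set (S i)) (σ : S i → ℝ) : Prop :=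
  (∀ s, 0 ≤ σ s) ∧ (∑ s : S i, σ s = 1) ∧ ∀ s, σ s ≠ 0 → s ∈ Ri

/-- `s` is strictly dominated by a mixed strategy, given the utility `u`. -/
def MixedStrictDom (i : I) (Ri : Set (S i)) (Q : Set (Opp S i)) (u : Z → ℝ)
    (s : S i) : Prop :=
  ∃ σ : S i → ℝ, IsMixedOn i Ri σ ∧
    ∀ t ∈ Q, u (out ζ i s t) < ∑ s' : S i, σ s' * u (out ζ i s' t)

/-- The `i`-th component of the `𝕄` operator, given the utility `u` for player `i`. -/
def Mopi (i : I) (u : Z → ℝ) (R : ∀ j, Set (S j)) : Set (S i) :=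
  {s ∈ R i | ∀ h : H i, s ∈ Sh i h → (R i ∩ Sh i h).Nonempty →
    (OppSet R i ∩ Th i h).Nonempty →
    ¬ MixedStrictDom ζ i (R i ∩ Sh i h) (OppSet R i ∩ Th i h) u s}

/-- The `𝕄` operator, given a profile `u` of utilities. -/
def Mop (u : I → Z → ℝ) (R : ∀ j, Set (S j)) : ∀ j, Set (S j) := fun j =>
  Mopi ζ Sh Th j (u j) R

/-- The strong-rationalizability operator `ℝ(·)[u]`, given a profile `u` of utilities. -/
def Rop (u : I → Z → ℝ) (R : ∀ j, Set (S j)) : ∀ j, Set (S j) := fun j =>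
  {s ∈ R j | SeqRationalU ζ Sh Th R j (u j) s}

/-- Strong Rationalizability started from `R`, given a profile `u` of utilities. -/
def RiterFrom (u : I → Z → ℝ) (R : ∀ j, Set (S j)) : ℕ → ∀ j, Set (S j)
  | 0 => R
  | n + 1 => Rop ζ Sh Th u (RiterFrom u R n)

/-- Strong Rationalizability started from the full strategy sets. -/
def Riter (u : I → Z → ℝ) (k : ℕ) : ∀ j, Set (S j) :=
  RiterFrom ζ Sh Th u (fun _ => Set.univ) k

lemma spref_iff_aux (i : I) (u : Z → ℝ) (hu : Bernoulli pref i u) (x y : Z) :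
    SPref pref i x y ↔ u y < u x := by
  unfold SPref
  rw [← hu x y, ← hu y x]
  exact (lt_iff_le_not_ge).symm

/-- Key lemma: if `s` admits a weak dominator on every nonempty subset of `Q`,
then `s` is strictly dominated by a mixed strategy on each subset of `Q`. -/
lemma exists_mixed_dom_aux (i : I) (u : Z → ℝ) (hu : Bernoulli pref i u)
    (Ri : Set (S i)) (s : S i) (Q : Set (Opp S i))
    (hdom : ∀ Q' : Set (Opp S i), Q' ⊆ Q → Q'.Nonempty →
      ∃ s' ∈ Ri, WeakDom ζ pref i Q' s' s) :
    ∀ (n : ℕ) (Q' : Set (Opp S i)), Q'.ncard ≤ n → Q' ⊆ Q → Q'.Nonempty →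
      ∃ σ : S i → ℝ, IsMixedOn i Ri σ ∧
        ∀ t ∈ Q', u (out ζ i s t) < ∑ s' : S i, σ s' * u (out ζ i s' t) := by
  intro n
  induction n with
  | zero =>
    intro Q' hcard _ hne
    exact absurd hcard (by simpa using ((Set.ncard_pos (Set.toFinite Q')).mpr hne).not_ge)
  | succ n ih =>
    intro Q' hcard hsub hne
    obtain ⟨s1, hs1, hw, t0, ht0, hstr⟩ := hdom Q' hsub hne
    have hle : ∀ t ∈ Q', u (out ζ i s t) ≤ u (out ζ i s1 t) :=
      fun t ht => (hu _ _).mpr (hw t ht)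
    have hstr' : u (out ζ i s t0) < u (out ζ i s1 t0) :=
      (spref_iff_aux pref i u hu _ _).mp hstr
    by_cases hQ'' : ({t ∈ Q' | u (out ζ i s1 t) ≤ u (out ζ i s t)} : Set (Opp S i)).Nonempty
    · -- equality set nonempty: recurse and mix
      set Q'' : Set (Opp S i) := {t ∈ Q' | u (out ζ i s1 t) ≤ u (out ζ i s t)} with hQdef
      have hssub : Q'' ⊆ Q' := fun t ht => ht.1
      have hne0 : t0 ∉ Q'' := fun hc => absurd hc.2 (not_le.mpr hstr')
      have hltcard : Q''.ncard ≤ n := by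
        have : Q''.ncard < Q'.ncard :=
          Set.ncard_lt_ncard ⟨hssub, fun hc => hne0 (hc ht0)⟩ (Set.toFinite Q')
        omega
      obtain ⟨σ', ⟨h1, h2, h3⟩, hs'strict⟩ := ih Q'' hltcard (hssub.trans hsub) hQ''
      have hgpos : ∀ t ∈ Q', t ∉ Q'' → 0 < u (out ζ i s1 t) - u (out ζ i s t) := by
        intro t ht htn
        have : ¬ u (out ζ i s1 t) ≤ u (out ζ i s t) := fun hc => htn ⟨ht, hc⟩
        linarith [not_le.mp this]
      set V : Opp S i → ℝ := fun t => ∑ s' : S i, σ' s' * u (out ζ i s' t) with hV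
      set c : ℝ := Finset.univ.inf' Finset.univ_nonempty
        (fun t => if t ∈ Q' ∧ t ∉ Q'' ∧ 0 < u (out ζ i s1 t) - V t then
          (u (out ζ i s1 t) - u (out ζ i s t)) / (u (out ζ i s1 t) - V t) else 1) with hc
      have hcpos : 0 < c := by
        rw [hc, Finset.lt_inf'_iff]
        intro t _
        split_ifs with hcond
        · exact div_pos (hgpos t hcond.1 hcond.2.1) hcond.2.2
        · norm_num
      set ε : ℝ := min (1/2) (c/2) with hε
      have hε0 : 0 < ε := lt_min (by norm_num) (by linarith)
      have hε1 : ε ≤ 1/2 := min_le_left _ _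
      have hεc : ε ≤ c/2 := min_le_right _ _
      refine ⟨fun s' => (1-ε) * (if s' = s1 then 1 else 0) + ε * σ' s', ⟨?_, ?_, ?_⟩, ?_⟩
      · intro s'
        apply add_nonneg
        · apply mul_nonneg (by linarith)
          split_ifs <;> norm_num
        · exact mul_nonneg hε0.le (h1 s')
      · rw [Finset.sum_add_distrib, ← Finset.mul_sum, ← Finset.mul_sum, h2,
          Finset.sum_ite_eq' Finset.univ s1 (fun _ => (1:ℝ))]
        simp
      · intro s' hne'
        by_cases hs'1 : s' = s1
        · subst hs'1; exact hs1
        · refine h3 s' ?_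
          intro hc0
          apply hne'
          simp [hs'1, hc0]
      · intro t ht
        have hval : ∑ s' : S i, ((1-ε) * (if s' = s1 then 1 else 0) + ε * σ' s')
              * u (out ζ i s' t)
            = (1-ε) * u (out ζ i s1 t) + ε * V t := by
          rw [hV]
          simp only [add_mul, Finset.sum_add_distrib, mul_assoc, ite_mul, one_mul, zero_mul,
            ← Finset.mul_sum]
          rw [Finset.sum_ite_eq' Finset.univ s1 (fun s' => u (out ζ i s' t))]
          simp
        rw [hval]
        by_cases htQ'' : t ∈ Q''
        · -- on the equality set: strictness comes from σ'
          have heq : u (out ζ i s1 t) = u (out ζ i s t) :=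
            le_antisymm htQ''.2 (hle t ht)
          have hVt : u (out ζ i s t) < V t := hs'strict t htQ''
          rw [heq]
          nlinarith
        · -- strict gap from s1; ε small enough
          have hg : 0 < u (out ζ i s1 t) - u (out ζ i s t) := hgpos t ht htQ''
          by_cases hh : 0 < u (out ζ i s1 t) - V t
          · have hcle : c ≤ (u (out ζ i s1 t) - u (out ζ i s t)) / (u (out ζ i s1 t) - V t) := by
              have := Finset.inf'_le
                (fun t => if t ∈ Q' ∧ t ∉ Q'' ∧ 0 < u (out ζ i s1 t) - V t then
                  (u (out ζ i s1 t) - u (out ζ i s t)) / (u (out ζ i s1 t) - V t) else 1)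
                (Finset.mem_univ t)
              rw [if_pos ⟨ht, htQ'', hh⟩] at this
              rw [hc]; exact this
            have hεh : ε * (u (out ζ i s1 t) - V t)
                ≤ (u (out ζ i s1 t) - u (out ζ i s t)) / 2 := by
              have h1' : ε ≤ (u (out ζ i s1 t) - u (out ζ i s t)) / (u (out ζ i s1 t) - V t) / 2 := by
                linarith
              have := mul_le_mul_of_nonneg_right h1' hh.le
              rw [div_div, mul_comm ((u (out ζ i s1 t) - V t)) 2, ← div_div,
                div_mul_cancel₀ _ (ne_of_gt hh)] at this
              exact this
            nlinarith
          · push_neg at hh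
            nlinarith [mul_nonpos_of_nonneg_of_nonpos hε0.le (by linarith : u (out ζ i s1 t) - V t ≤ 0)]
    · -- equality set empty: s1 strictly dominates on all of Q'
      refine ⟨fun s' => if s' = s1 then 1 else 0, ⟨?_, ?_, ?_⟩, ?_⟩
      · intro s'; dsimp only; split_ifs <;> norm_num
      · rw [Finset.sum_ite_eq' Finset.univ s1 (fun _ => (1:ℝ))]; simp
      · intro s' hne'
        by_cases hs'1 : s' = s1
        · subst hs'1; exact hs1
        · simp [hs'1] at hne'
      · intro t ht
        have : ¬ u (out ζ i s1 t) ≤ u (out ζ i s t) := by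
          intro hc
          exact hQ'' ⟨t, ht, hc⟩
        have hlt := not_le.mp this
        have hsum : ∑ s' : S i, (if s' = s1 then (1:ℝ) else 0) * u (out ζ i s' t)
            = u (out ζ i s1 t) := by
          simp only [ite_mul, one_mul, zero_mul]
          rw [Finset.sum_ite_eq' Finset.univ s1 (fun s' => u (out ζ i s' t))]
          simp
        rw [hsum]; exact hlt

theorem Mop_subset_Uop
    (hcomp : ∀ (i : I) (x y : Z), pref i x y ∨ pref i y x)
    (htrans : ∀ i : I, Transitive (pref i))
    (hSh : ∀ (i : I) (h : H i), (Sh i h).Nonempty)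
    (hTh : ∀ (i : I) (h : H i), (Th i h).Nonempty)
    (hrep : Replacement ζ Sh Th)
    (u : I → Z → ℝ) (hu : ∀ j : I, Bernoulli pref j (u j))
    (R : ∀ j, Set (S j)) (hR : IsRestriction R) :
    ∀ j : I, Mop ζ Sh Th u R j ⊆ Uop ζ pref Sh Th R j := by
  intro j s hs
  obtain ⟨hsR, hM⟩ := hs
  refine ⟨hsR, ?_⟩
  rintro ⟨h, hsh, hRi, hQ, hbd⟩
  apply hM h hsh hRi hQ
  have hdom : ∀ Q' : Set (Opp S j), Q' ⊆ OppSet R j ∩ Th j h → Q'.Nonempty →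
      ∃ s' ∈ R j ∩ Sh j h, WeakDom ζ pref j Q' s' s := by
    intro Q' hsub hne
    have hna := hbd Q' hsub hne
    by_contra hcon
    push_neg at hcon
    exact hna ⟨⟨hsR, hsh⟩, fun s' hs' hw => hcon s' hs' hw⟩
  obtain ⟨σ, hσ, hstrict⟩ := exists_mixed_dom_aux ζ pref j (u j) (hu j) (R j ∩ Sh j h) s
    (OppSet R j ∩ Th j h) hdom ((OppSet R j ∩ Th j h).ncard) (OppSet R j ∩ Th j h)
    le_rfl (subset_refl _) hQ
  exact ⟨σ, hσ, hstrict⟩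

end OrdinalGames

end ICBD
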